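/- Let Γ be a finite connected 3-GNDB graph of diameter 2. Then there exists a positive integer n such that Γ is isomorphic to the complete bipartite graph K_{n,3n}. -/

import Mathlib

/-- The set of vertices closer to `a` than to `b`. -/
def closerSet {V : Type*} (G : SimpleGraph V) (a b : V) : Set V :=
  {x | G.dist x a < G.dist x b}

/-- Let `Γ` be a finite connected 3-GNDB graph of diameter 2. Then there exists a
positive integer `n` such that `Γ` is isomorphic to `K_{n,3n}`. -/
theorem stmt_2 {V : Type*} [Fintype V] (G : SimpleGraph V) (hconn : G.Connected)
    (hGNDB : ∃ γ : ℕ, 0 < γ ∧ ∀ a b : V, G.Adj a b →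
      ({(closerSet G a b).ncard, (closerSet G b a).ncard} : Set ℕ) = {γ, 3 * γ})
    (hdiam : G.diam = 2) :
    ∃ n : ℕ, 0 < n ∧
      Nonempty (G ≃g completeBipartiteGraph (Fin n) (Fin (3 * n))) := by
  classical
  obtain ⟨γ, hγ, hW⟩ := hGNDB
  -- distances are at most 2
  have hdist2 : ∀ u v : V, G.dist u v ≤ 2 := by
    intro u v
    have h := G.dist_le_diam (G.ediam_ne_top_of_diam_ne_zero (by rw [hdiam]; omega))
      (u := u) (v := v)
    omega
  have hdist_two : ∀ u v : V, u ≠ v → ¬ G.Adj u v → G.dist u v = 2 := by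
    intro u v huv hadj
    have h0 : G.dist u v ≠ 0 := by
      rw [SimpleGraph.dist_ne_zero_iff_ne_and_reachable]
      exact ⟨huv, hconn.preconnected u v⟩
    have h1 : G.dist u v ≠ 1 := fun h => hadj (SimpleGraph.dist_eq_one_iff_adj.mp h)
    have := hdist2 u v; omega
  have dval : ∀ x y : V, G.dist x y = if x = y then 0 else if G.Adj x y then 1 else 2 := by
    intro x y
    split_ifs with h1 h2
    · subst h1; exact SimpleGraph.dist_self
    · exact SimpleGraph.dist_eq_one_iff_adj.mpr h2
    · exact hdist_two x y h1 h2
  -- description of the closer set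
  have hcloser : ∀ a b : V, G.Adj a b →
      closerSet G a b = insert a {x | x ≠ b ∧ G.Adj a x ∧ ¬ G.Adj b x} := by
    intro a b hab
    have hne : a ≠ b := hab.ne
    ext x
    simp only [closerSet, Set.mem_setOf_eq, Set.mem_insert_iff, dval x a, dval x b]
    rcases eq_or_ne x a with rfl | hxa
    · simp [hne, hab]
    · rcases eq_or_ne x b with rfl | hxb
      · simp [hxa, hab.symm]
      · by_cases h1 : G.Adj x a <;> by_cases h2 : G.Adj x b
        · simp [hxa, hxb, h1, h2, h2.symm]
        · have hx2 : ¬ G.Adj b x := fun h => h2 h.symm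
          simp [hxa, hxb, h1, h2, h1.symm, hx2]
        · have hx1 : ¬ G.Adj a x := fun h => h1 h.symm
          simp [hxa, hxb, h1, h2, hx1]
        · have hx1 : ¬ G.Adj a x := fun h => h1 h.symm
          simp [hxa, hxb, h1, h2, hx1]
  -- counting lemma
  have hkey : ∀ a b : V, G.Adj a b →
      (closerSet G a b).ncard + ((G.neighborSet a ∩ G.neighborSet b).ncard + 1)
        = (G.neighborSet a).ncard + 1 := by
    intro a b hab
    have hset : insert a (G.neighborSet a)
        = closerSet G a b ∪ ((G.neighborSet a ∩ G.neighborSet b) ∪ {b}) := by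
      rw [hcloser a b hab]
      ext x
      simp only [Set.mem_insert_iff, Set.mem_union, Set.mem_inter_iff,
        SimpleGraph.mem_neighborSet, Set.mem_setOf_eq, Set.mem_singleton_iff]
      constructor
      · rintro (rfl | hx)
        · exact Or.inl (Or.inl rfl)
        by_cases hxb : x = b
        · exact Or.inr (Or.inr hxb)
        by_cases hbx : G.Adj b x
        · exact Or.inr (Or.inl ⟨hx, hbx⟩)
        · exact Or.inl (Or.inr ⟨hxb, hx, hbx⟩)
      · rintro ((rfl | ⟨hxb, hax, hbx⟩) | (⟨hax, hbx⟩ | rfl))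
        · exact Or.inl rfl
        · exact Or.inr hax
        · exact Or.inr hax
        · exact Or.inr hab
    have d2 : Disjoint (G.neighborSet a ∩ G.neighborSet b) ({b} : Set V) := by
      rw [Set.disjoint_right]
      rintro x rfl ⟨_, hbx⟩
      exact G.irrefl hbx
    have d1 : Disjoint (closerSet G a b) ((G.neighborSet a ∩ G.neighborSet b) ∪ {b}) := by
      rw [hcloser a b hab, Set.disjoint_left]
      rintro x (rfl | ⟨hxb, hax, hbx⟩) hmem
      · rcases hmem with ⟨haa, _⟩ | rfl
        · exact G.irrefl haa
        · exact hab.ne rfl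
      · rcases hmem with ⟨_, hbx'⟩ | rfl
        · exact hbx hbx'
        · exact hxb rfl
    have c1 : (insert a (G.neighborSet a)).ncard = (G.neighborSet a).ncard + 1 :=
      Set.ncard_insert_of_notMem (fun h => G.irrefl h) (Set.toFinite _)
    have c2 : ((G.neighborSet a ∩ G.neighborSet b) ∪ ({b} : Set V)).ncard
        = (G.neighborSet a ∩ G.neighborSet b).ncard + 1 := by
      rw [Set.ncard_union_eq d2 (Set.toFinite _) (Set.toFinite _), Set.ncard_singleton]
    have c3 := Set.ncard_union_eq d1 (Set.toFinite _) (Set.toFinite _)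
    rw [hset, c3, c2] at c1
    omega
  -- edge relation from the GNDB hypothesis
  have hedge : ∀ a b : V, G.Adj a b →
      ((closerSet G a b).ncard = γ ∧ (closerSet G b a).ncard = 3*γ) ∨
      ((closerSet G a b).ncard = 3*γ ∧ (closerSet G b a).ncard = γ) := by
    intro a b hab
    have h := hW a b hab
    have h1 : (closerSet G a b).ncard ∈ ({γ, 3*γ} : Set ℕ) := h ▸ Set.mem_insert _ _
    have h2 : (closerSet G b a).ncard ∈ ({γ, 3*γ} : Set ℕ) :=
      h ▸ Set.mem_insert_iff.mpr (Or.inr rfl)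
    have h3 : γ ∈ ({(closerSet G a b).ncard, (closerSet G b a).ncard} : Set ℕ) :=
      h.symm ▸ Set.mem_insert _ _
    have h4 : 3*γ ∈ ({(closerSet G a b).ncard, (closerSet G b a).ncard} : Set ℕ) :=
      h.symm ▸ Set.mem_insert_iff.mpr (Or.inr rfl)
    simp only [Set.mem_insert_iff, Set.mem_singleton_iff] at h1 h2 h3 h4
    omega
  have hdeg : ∀ a b : V, G.Adj a b →
      ((G.neighborSet a).ncard = γ + (G.neighborSet a ∩ G.neighborSet b).ncard ∧
       (G.neighborSet b).ncard = 3*γ + (G.neighborSet a ∩ G.neighborSet b).ncard) ∨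
      ((G.neighborSet a).ncard = 3*γ + (G.neighborSet a ∩ G.neighborSet b).ncard ∧
       (G.neighborSet b).ncard = γ + (G.neighborSet a ∩ G.neighborSet b).ncard) := by
    intro a b hab
    have k1 := hkey a b hab
    have k2 := hkey b a hab.symm
    rw [Set.inter_comm] at k2
    have := hedge a b hab
    omega
  -- triangle-free
  have htf : ∀ a b c : V, G.Adj a b → G.Adj b c → G.Adj a c → False := by
    intro a b c hab hbc hac
    have h1 := hdeg a b hab
    have h2 := hdeg b c hbc
    have h3 := hdeg a c hac
    omega
  have hlam : ∀ a b : V, G.Adj a b → (G.neighborSet a ∩ G.neighborSet b) = ∅ := by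
    intro a b hab
    ext c
    simp only [Set.mem_inter_iff, SimpleGraph.mem_neighborSet, Set.mem_empty_iff_false,
      iff_false, not_and]
    intro h1 h2
    exact htf a b c hab h2 h1
  have hdeg' : ∀ a b : V, G.Adj a b →
      ((G.neighborSet a).ncard = γ ∧ (G.neighborSet b).ncard = 3*γ) ∨
      ((G.neighborSet a).ncard = 3*γ ∧ (G.neighborSet b).ncard = γ) := by
    intro a b hab
    have h := hdeg a b hab
    rw [hlam a b hab, Set.ncard_empty] at h
    omega
  -- every vertex has a neighbor
  have hnt : Nontrivial V := SimpleGraph.nontrivial_of_diam_ne_zero (by rw [hdiam]; omega)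
  have hnbr : ∀ v : V, ∃ u, G.Adj v u := by
    intro v
    obtain ⟨u, hu⟩ := exists_ne v
    obtain ⟨p⟩ := hconn.preconnected v u
    cases p with
    | nil => exact absurd rfl hu
    | cons h q => exact ⟨_, h⟩
  have hdichot : ∀ v : V, (G.neighborSet v).ncard = γ ∨ (G.neighborSet v).ncard = 3*γ := by
    intro v
    obtain ⟨u, hu⟩ := hnbr v
    rcases hdeg' v u hu with ⟨h, _⟩ | ⟨h, _⟩
    · exact Or.inl h
    · exact Or.inr h
  -- completeness between the two classes
  have hadjfull : ∀ a b : V, (G.neighborSet a).ncard = 3*γ → (G.neighborSet b).ncard = γ →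
      G.Adj a b := by
    intro a b ha hb
    by_contra hnadj
    have hne' : a ≠ b := by rintro rfl; omega
    have h2 : G.dist a b = 2 := hdist_two a b hne' hnadj
    obtain ⟨p, hp⟩ := hconn.exists_walk_length_eq_dist a b
    rw [h2] at hp
    cases p with
    | nil => simp at hp
    | cons h q =>
      cases q with
      | nil => simp at hp
      | cons h' q' =>
        cases q' with
        | nil =>
          rcases hdeg' _ _ h with ⟨h1, h2'⟩ | ⟨h1, h2'⟩
          · omega
          · rcases hdeg' _ _ h' with ⟨h3, h4⟩ | ⟨h3, h4⟩ <;> omega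
        | cons h'' q'' => simp [SimpleGraph.Walk.length_cons] at hp
  -- adjacency characterization
  have hadj_iff : ∀ a b : V, G.Adj a b ↔
      ((G.neighborSet a).ncard = 3*γ ∧ (G.neighborSet b).ncard = γ) ∨
      ((G.neighborSet a).ncard = γ ∧ (G.neighborSet b).ncard = 3*γ) := by
    intro a b
    constructor
    · intro hab
      rcases hdeg' a b hab with ⟨h1, h2⟩ | ⟨h1, h2⟩
      · exact Or.inr ⟨h1, h2⟩
      · exact Or.inl ⟨h1, h2⟩
    · rintro (⟨h1, h2⟩ | ⟨h1, h2⟩)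
      · exact hadjfull a b h1 h2
      · exact (hadjfull b a h2 h1).symm
  -- both classes are nonempty
  obtain ⟨v0, u0, hvu⟩ : ∃ v u : V, G.Adj v u := by
    obtain ⟨v⟩ := (inferInstance : Nonempty V)
    obtain ⟨u, hu⟩ := hnbr v
    exact ⟨v, u, hu⟩
  obtain ⟨a0, ha0⟩ : ∃ a, (G.neighborSet a).ncard = 3*γ := by
    rcases hdeg' v0 u0 hvu with h | h
    · exact ⟨u0, h.2⟩
    · exact ⟨v0, h.1⟩
  obtain ⟨b0, hb0⟩ : ∃ b, (G.neighborSet b).ncard = γ := by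
    rcases hdeg' v0 u0 hvu with h | h
    · exact ⟨v0, h.1⟩
    · exact ⟨u0, h.2⟩
  -- the sizes of the classes
  set p : V → Prop := fun v => (G.neighborSet v).ncard = 3*γ with hp
  have hAset : G.neighborSet b0 = {v | p v} := by
    ext v
    simp only [SimpleGraph.mem_neighborSet, Set.mem_setOf_eq, hp]
    constructor
    · intro h
      rcases hdeg' b0 v h with ⟨h1, h2⟩ | ⟨h1, h2⟩
      · exact h2
      · omega
    · intro h
      exact (hadjfull v b0 h hb0).symm
  have hBset : G.neighborSet a0 = {v | (G.neighborSet v).ncard = γ} := by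
    ext v
    simp only [SimpleGraph.mem_neighborSet, Set.mem_setOf_eq]
    constructor
    · intro h
      rcases hdeg' a0 v h with ⟨h1, h2⟩ | ⟨h1, h2⟩
      · omega
      · exact h2
    · intro h
      exact hadjfull a0 v ha0 h
  have hnotp : ∀ v : V, ¬ p v ↔ (G.neighborSet v).ncard = γ := by
    intro v
    have := hdichot v
    simp only [hp]
    omega
  have hAcard : Fintype.card {v // p v} = γ := by
    rw [← Nat.card_eq_fintype_card]
    have : Nat.card {v // p v} = ({v | p v} : Set V).ncard := Nat.card_coe_set_eq _
    rw [this, ← hAset, hb0]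
  have hBcard : Fintype.card {v // ¬ p v} = 3*γ := by
    rw [← Nat.card_eq_fintype_card]
    have h1 : {v : V | ¬ p v} = {v | (G.neighborSet v).ncard = γ} := by
      ext v; exact hnotp v
    have : Nat.card {v // ¬ p v} = ({v | ¬ p v} : Set V).ncard := Nat.card_coe_set_eq _
    rw [this, h1, ← hBset, ha0]
  -- build the isomorphism
  let eA : {v // p v} ≃ Fin γ := Fintype.equivFinOfCardEq hAcard
  let eB : {v // ¬ p v} ≃ Fin (3*γ) := Fintype.equivFinOfCardEq hBcard
  let e : V ≃ (Fin γ ⊕ Fin (3*γ)) := (Equiv.sumCompl p).symm.trans (Equiv.sumCongr eA eB)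
  refine ⟨γ, hγ, ⟨⟨e, ?_⟩⟩⟩
  intro a b
  show (completeBipartiteGraph (Fin γ) (Fin (3*γ))).Adj (e a) (e b) ↔ G.Adj a b
  rw [hadj_iff a b]
  by_cases hpa : p a <;> by_cases hpb : p b
  · rw [show e a = Sum.inl (eA ⟨a, hpa⟩) by
        simp [e, Equiv.sumCompl_symm_apply_of_pos (p := p) hpa],
      show e b = Sum.inl (eA ⟨b, hpb⟩) by
        simp [e, Equiv.sumCompl_symm_apply_of_pos (p := p) hpb]]
    simp only [hp] at hpa hpb
    constructor
    · intro h; exact absurd h (by simp [completeBipartiteGraph])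
    · rintro (⟨h3, h4⟩ | ⟨h3, h4⟩) <;> omega
  · rw [show e a = Sum.inl (eA ⟨a, hpa⟩) by
        simp [e, Equiv.sumCompl_symm_apply_of_pos (p := p) hpa],
      show e b = Sum.inr (eB ⟨b, hpb⟩) by
        simp [e, Equiv.sumCompl_symm_apply_of_neg (p := p) hpb]]
    have h2 := (hnotp b).mp hpb
    simp only [hp] at hpa
    constructor
    · intro _; exact Or.inl ⟨hpa, h2⟩
    · intro _; simp [completeBipartiteGraph]
  · rw [show e a = Sum.inr (eB ⟨a, hpa⟩) by
        simp [e, Equiv.sumCompl_symm_apply_of_neg (p := p) hpa],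
      show e b = Sum.inl (eA ⟨b, hpb⟩) by
        simp [e, Equiv.sumCompl_symm_apply_of_pos (p := p) hpb]]
    have h1 := (hnotp a).mp hpa
    simp only [hp] at hpb
    constructor
    · intro _; exact Or.inr ⟨h1, hpb⟩
    · intro _; simp [completeBipartiteGraph]
  · rw [show e a = Sum.inr (eB ⟨a, hpa⟩) by
        simp [e, Equiv.sumCompl_symm_apply_of_neg (p := p) hpa],
      show e b = Sum.inr (eB ⟨b, hpb⟩) by
        simp [e, Equiv.sumCompl_symm_apply_of_neg (p := p) hpb]]
    have h1 := (hnotp a).mp hpa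
    have h2 := (hnotp b).mp hpb
    constructor
    · intro h; exact absurd h (by simp [completeBipartiteGraph])
    · rintro (⟨h3, h4⟩ | ⟨h3, h4⟩) <;> omega
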